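/- Let x, y ∈ ℝ^d and let p, q be unit vectors with |⟨p,q⟩| ≤ 1/√2. Suppose t₁, τ₁ ∈ ℝ satisfy ‖(x + t₁p) − (y + τ₁q)‖ ≤ 2. Then for every pair (t, τ) with max(|t − t₁|, |τ − τ₁|) ≥ 12, one has ‖(x + t·p) − (y + τ·q)‖ ≥ 6. -/

import Mathlib

open Real

set_option maxHeartbeats 1000000 in
/-- If two parametrized lines with nearly orthogonal unit directions come within distance 2
at parameters `(t₁, τ₁)`, then at any `(t, τ)` with `max |t−t₁| |τ−τ₁| ≥ 12` the points are
at distance at least 6. -/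
theorem lines_separate (d : ℕ) (x y p q : EuclideanSpace ℝ (Fin d))
    (hp : ‖p‖ = 1) (hq : ‖q‖ = 1) (hpq : |(inner ℝ p q : ℝ)| ≤ 1 / Real.sqrt 2)
    (t₁ τ₁ : ℝ) (h₁ : ‖(x + t₁ • p) - (y + τ₁ • q)‖ ≤ 2) :
    ∀ t τ : ℝ, max |t - t₁| |τ - τ₁| ≥ 12 →
      ‖(x + t • p) - (y + τ • q)‖ ≥ 6 := by
  intro t τ hmax
  set a := t - t₁ with ha
  set b := τ - τ₁ with hb
  set c : ℝ := inner ℝ p q with hc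
  have h2 : (0:ℝ) < Real.sqrt 2 := by positivity
  have hs : Real.sqrt 2 ^ 2 = 2 := Real.sq_sqrt (by norm_num)
  have hsc : Real.sqrt 2 * |c| ≤ 1 := by
    rw [le_div_iff₀ h2] at hpq
    rw [mul_comm]; exact hpq
  have hnorm : ‖a • p - b • q‖^2 = a^2 - 2*(a*b)*c + b^2 := by
    rw [@norm_sub_sq_real, norm_smul, norm_smul,
      real_inner_smul_left, real_inner_smul_right, hp, hq, ← hc]
    simp [Real.norm_eq_abs]
    nlinarith [sq_abs a, sq_abs b]
  have hab : |a * b| = |a| * |b| := abs_mul a b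
  have hcross : 2*(a*b)*c ≤ Real.sqrt 2 * (|a| * |b|) := by
    have h1 : (a*b)*c ≤ |a*b| * |c| := by
      calc (a*b)*c ≤ |(a*b)*c| := le_abs_self _
        _ = |a*b| * |c| := abs_mul _ _
    nlinarith [abs_nonneg (a*b), abs_nonneg c, abs_nonneg a, abs_nonneg b]
  have h64 : ‖a • p - b • q‖^2 ≥ 72 := by
    rw [hnorm]
    rcases le_or_gt 12 |a| with hA | hA
    · nlinarith [sq_nonneg (Real.sqrt 2 * |b| - |a|), sq_abs a, sq_abs b,
        abs_nonneg a, abs_nonneg b]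
    · have hB : 12 ≤ |b| := by
        rcases max_cases |a| |b| with ⟨h, _⟩ | ⟨h, _⟩
        · rw [h] at hmax; linarith
        · rw [h] at hmax; linarith
      nlinarith [sq_nonneg (Real.sqrt 2 * |a| - |b|), sq_abs a, sq_abs b,
        abs_nonneg a, abs_nonneg b]
  have hkey : ‖a • p - b • q‖ ≥ 8 := by
    nlinarith [norm_nonneg (a • p - b • q)]
  have hdecomp : (x + t • p) - (y + τ • q)
      = ((x + t₁ • p) - (y + τ₁ • q)) + (a • p - b • q) := by
    rw [ha, hb]; module
  have htri : ‖a • p - b • q‖ ≤ ‖(x + t₁ • p) - (y + τ₁ • q)‖ + ‖(x + t • p) - (y + τ • q)‖ := by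
    have : a • p - b • q = ((x + t • p) - (y + τ • q)) - ((x + t₁ • p) - (y + τ₁ • q)) := by
      rw [hdecomp]; abel
    rw [this]
    calc ‖_ - _‖ ≤ ‖(x + t • p) - (y + τ • q)‖ + ‖(x + t₁ • p) - (y + τ₁ • q)‖ := norm_sub_le _ _
      _ = _ := by ring
  linarith
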